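/- Let A be an n×n K-matrix (a Z-matrix whose principal minors are all positive) and let B be an entrywise nonnegative n×n real matrix. Then the spectral radius of A⁻¹B is strictly less than 1 if and only if A − B is a K-matrix. -/

import Mathlib

open Matrix Finset Polynomial Filter Topology

/-- A real square matrix is a P-matrix if all of its principal minors are positive. -/
def IsPMatrix {n : ℕ} (A : Matrix (Fin n) (Fin n) ℝ) : Prop :=
  ∀ s : Finset (Fin n), s.Nonempty →
    0 < (A.submatrix (fun i : s => (i : Fin n)) (fun j : s => (j : Fin n))).det

/-- A Z-matrix has nonpositive off-diagonal entries. -/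
def IsZMatrix {n : ℕ} (A : Matrix (Fin n) (Fin n) ℝ) : Prop :=
  ∀ i j, i ≠ j → A i j ≤ 0

/-- A K-matrix is a Z-matrix that is also a P-matrix. -/
def IsKMatrix {n : ℕ} (A : Matrix (Fin n) (Fin n) ℝ) : Prop :=
  IsZMatrix A ∧ IsPMatrix A


lemma aux_ker {ι : Type*} [Fintype ι] [DecidableEq ι] (M : Matrix ι ι ℝ)
    (hZ : ∀ i j, i ≠ j → M i j ≤ 0) (x : ι → ℝ)
    (hx : ∀ i, 0 < x i) (hMx : ∀ i, 0 < M.mulVec x i) {t : ℝ} (ht : 0 ≤ t) :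
    (M + t • 1).det ≠ 0 := by
  intro hdet
  obtain ⟨v, hv0, hv⟩ := (Matrix.exists_mulVec_eq_zero_iff).mpr hdet
  obtain ⟨j0, hj0⟩ : ∃ j, v j ≠ 0 := Function.ne_iff.mp hv0
  haveI : Nonempty ι := ⟨j0⟩
  obtain ⟨i0, -, hmax⟩ := Finset.exists_max_image (univ : Finset ι) (fun i => |v i| / x i)
    ⟨j0, mem_univ _⟩
  set c : ℝ := |v i0| / x i0 with hc
  have hcb : ∀ i, |v i| ≤ c * x i := by
    intro i
    have := hmax i (mem_univ i)
    calc |v i| = |v i| / x i * x i := (div_mul_cancel₀ _ (hx i).ne').symm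
    _ ≤ c * x i := mul_le_mul_of_nonneg_right this (hx i).le
  have hcpos : 0 < c := by
    have h1 : 0 < |v j0| := abs_pos.mpr hj0
    have := hmax j0 (mem_univ j0)
    have h2 : 0 < |v j0| / x j0 := div_pos h1 (hx j0)
    exact lt_of_lt_of_le h2 this
  have hvi0 : |v i0| = c * x i0 := (div_mul_cancel₀ _ (hx i0).ne').symm
  -- row i0 of the kernel equation
  have hrow : ∑ j, (M + t • 1) i0 j * v j = 0 := congrFun hv i0
  have hrow' : (M i0 i0 + t) * v i0 = -∑ j ∈ univ.erase i0, M i0 j * v j := by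
    have hsplit : ∑ j, (M + t • 1) i0 j * v j
        = (M i0 i0 + t) * v i0 + ∑ j ∈ univ.erase i0, M i0 j * v j := by
      rw [← Finset.add_sum_erase _ _ (mem_univ i0)]
      congr 1
      · simp [Matrix.add_apply, Matrix.smul_apply, Matrix.one_apply]
      · apply Finset.sum_congr rfl
        intro j hj
        have : j ≠ i0 := (Finset.mem_erase.mp hj).1
        simp [Matrix.add_apply, Matrix.smul_apply, Matrix.one_apply_ne (Ne.symm this)]
    linarith [hsplit.symm.trans hrow]
  have key : (M i0 i0 + t) * (c * x i0) < M i0 i0 * (c * x i0) := by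
    have h1 : (M i0 i0 + t) * (c * x i0) ≤ |(M i0 i0 + t) * v i0| := by
      rw [abs_mul, hvi0]
      exact mul_le_mul_of_nonneg_right (le_abs_self _)
        (mul_nonneg hcpos.le (hx i0).le)
    have h2 : |(M i0 i0 + t) * v i0| ≤ ∑ j ∈ univ.erase i0, (-M i0 j) * (c * x j) := by
      rw [hrow', abs_neg]
      refine (Finset.abs_sum_le_sum_abs _ _).trans ?_
      apply Finset.sum_le_sum
      intro j hj
      have hji : j ≠ i0 := (Finset.mem_erase.mp hj).1
      rw [abs_mul]
      have hMij : 0 ≤ -M i0 j := neg_nonneg.mpr (hZ i0 j (Ne.symm hji))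
      have : |M i0 j| = -M i0 j := abs_of_nonpos (hZ i0 j (Ne.symm hji))
      rw [this]
      exact mul_le_mul_of_nonneg_left (hcb j) hMij
    have h3 : ∑ j ∈ univ.erase i0, (-M i0 j) * (c * x j)
        = c * (M i0 i0 * x i0 - M.mulVec x i0) := by
      have : M.mulVec x i0 = M i0 i0 * x i0 + ∑ j ∈ univ.erase i0, M i0 j * x j := by
        rw [Matrix.mulVec, dotProduct, ← Finset.add_sum_erase _ _ (mem_univ i0)]
      rw [this]
      have h5 : ∑ j ∈ univ.erase i0, -M i0 j * (c * x j)
          = c * ∑ j ∈ univ.erase i0, -(M i0 j * x j) := by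
        rw [Finset.mul_sum]
        exact Finset.sum_congr rfl (fun j _ => by ring)
      rw [h5, Finset.sum_neg_distrib]
      ring
    have h4 : c * (M i0 i0 * x i0 - M.mulVec x i0) < c * (M i0 i0 * x i0) := by
      apply mul_lt_mul_of_pos_left _ hcpos
      linarith [hMx i0]
    calc (M i0 i0 + t) * (c * x i0) ≤ |(M i0 i0 + t) * v i0| := h1
      _ ≤ _ := h2
      _ = _ := h3
      _ < c * (M i0 i0 * x i0) := h4
      _ = M i0 i0 * (c * x i0) := by ring
  have hpos : 0 < c * x i0 := mul_pos hcpos (hx i0)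
  nlinarith [key]

lemma lem_posdet {ι : Type*} [Fintype ι] [DecidableEq ι] (M : Matrix ι ι ℝ)
    (hZ : ∀ i j, i ≠ j → M i j ≤ 0) (x : ι → ℝ)
    (hx : ∀ i, 0 < x i) (hMx : ∀ i, 0 < M.mulVec x i) : 0 < M.det := by
  by_cases hE : IsEmpty ι
  · simp [Matrix.det_isEmpty]
  haveI : Nonempty ι := not_isEmpty_iff.mp hE
  set p := (-M).charpoly with hp
  have hev : ∀ t : ℝ, p.eval t = (M + t • 1).det := by
    intro t
    have h1 : p.eval t = ((charmatrix (-M)).map (evalRingHom t)).det := by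
      rw [hp, Matrix.charpoly]
      exact RingHom.map_det (evalRingHom t) _
    rw [h1]
    congr 1
    ext i j
    by_cases h : i = j
    · subst h
      simp [charmatrix_apply_eq, Matrix.add_apply, Matrix.smul_apply, Matrix.one_apply_eq]
      ring
    · simp [charmatrix_apply_ne _ _ _ h, Matrix.add_apply, Matrix.smul_apply,
        Matrix.one_apply_ne h]
  have h0 : p.eval 0 = M.det := by
    rw [hev 0]; congr 1; simp
  have hne : ∀ t : ℝ, 0 ≤ t → p.eval t ≠ 0 := by
    intro t ht
    rw [hev t]
    exact aux_ker M hZ x hx hMx ht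
  have hdeg : 0 < p.degree := by
    rw [hp]
    have h1 : (-M).charpoly.natDegree = Fintype.card ι := charpoly_natDegree_eq_dim (-M)
    have h2 : 0 < Fintype.card ι := Fintype.card_pos
    rw [← Polynomial.natDegree_pos_iff_degree_pos, h1]
    exact h2
  have hmono : Tendsto (fun t => p.eval t) atTop atTop :=
    p.tendsto_atTop_of_leadingCoeff_nonneg hdeg
      (by rw [hp, (charpoly_monic (-M)).leadingCoeff]; norm_num)
  obtain ⟨T, hT⟩ : ∃ T, 0 ≤ T ∧ 0 < p.eval T := by
    have := (hmono.eventually_ge_atTop 1).and (eventually_ge_atTop (0:ℝ))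
    obtain ⟨T, h1, h2⟩ := this.exists
    exact ⟨T, h2, lt_of_lt_of_le one_pos h1⟩
  rw [← h0]
  rcases lt_trichotomy (p.eval 0) 0 with h | h | h
  · exfalso
    have hc : ContinuousOn (fun t => p.eval t) (Set.Icc 0 T) := (p.continuous).continuousOn
    have : (0:ℝ) ∈ Set.Icc (p.eval 0) (p.eval T) := ⟨h.le, hT.2.le⟩
    obtain ⟨t, htm, hteq⟩ := intermediate_value_Icc hT.1 hc this
    exact hne t htm.1 hteq
  · exact absurd h (hne 0 le_rfl)
  · exact h

lemma isP_of_semipos {n : ℕ} (M : Matrix (Fin n) (Fin n) ℝ) (hZ : IsZMatrix M)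
    (x : Fin n → ℝ) (hx : ∀ i, 0 < x i) (hMx : ∀ i, 0 < M.mulVec x i) : IsPMatrix M := by
  intro s hs
  refine lem_posdet _ (fun i j hij => hZ i j (fun h => hij (Subtype.ext h)))
    (fun i : s => x i) (fun i => hx i) ?_
  intro i
  have heq : (M.submatrix (fun i : s => (i : Fin n)) (fun j : s => (j : Fin n))).mulVec
      (fun j : s => x j) i = ∑ j ∈ s, M i j * x j := by
    rw [Matrix.mulVec, dotProduct]
    exact Finset.sum_coe_sort s (fun j => M i j * x j)
  rw [heq]
  have hfull : M.mulVec x i = ∑ j ∈ s, M i j * x j + ∑ j ∈ sᶜ, M i j * x j := by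
    rw [Matrix.mulVec, dotProduct, ← Finset.sum_add_sum_compl s]
  have hcomp : ∑ j ∈ sᶜ, M i j * x j ≤ 0 := by
    apply Finset.sum_nonpos
    intro j hj
    have hji : (i : Fin n) ≠ j := by
      intro h; rw [← h] at hj; exact (Finset.mem_compl.mp hj) i.2
    exact mul_nonpos_of_nonpos_of_nonneg (hZ i j hji) (hx j).le
  have := hMx i
  linarith
lemma diag_pos {n : ℕ} {M : Matrix (Fin n) (Fin n) ℝ} (hP : IsPMatrix M) (i : Fin n) :
    0 < M i i := by
  have h := hP {i} ⟨i, Finset.mem_singleton_self i⟩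
  haveI : Subsingleton ({i} : Finset (Fin n)) := by
    constructor
    rintro ⟨x, hx⟩ ⟨y, hy⟩
    simp only [Finset.mem_singleton] at hx hy
    subst hx; subst hy; rfl
  rw [Matrix.det_eq_elem_of_subsingleton _ ⟨i, Finset.mem_singleton_self i⟩] at h
  exact h

lemma det_pos {n : ℕ} {M : Matrix (Fin n) (Fin n) ℝ} (hP : IsPMatrix M) : 0 < M.det := by
  rcases Nat.eq_zero_or_pos n with h | h
  · subst h
    simp [Matrix.det_isEmpty]
  · have hne : (univ : Finset (Fin n)).Nonempty := by
      rw [← Finset.card_pos]; simpa using h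
    have := hP univ hne
    let e : {x // x ∈ (univ : Finset (Fin n))} ≃ Fin n :=
      ⟨fun x => x.1, fun x => ⟨x, Finset.mem_univ x⟩, fun x => rfl, fun x => rfl⟩
    have h2 := Matrix.det_submatrix_equiv_self e M
    have h3 : M.submatrix (fun i : (univ : Finset (Fin n)) => (i : Fin n))
        (fun j : (univ : Finset (Fin n)) => (j : Fin n)) = M.submatrix ⇑e ⇑e := by
      ext a b; rfl
    rw [h3, h2] at this
    exact this

noncomputable def schurc {n : ℕ} (M : Matrix (Fin (n+1)) (Fin (n+1)) ℝ) :
    Matrix (Fin n) (Fin n) ℝ :=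
  fun i j => M i.succ j.succ - M i.succ 0 * M 0 j.succ / M 0 0

lemma schur_minor {n : ℕ} (M : Matrix (Fin (n+1)) (Fin (n+1)) ℝ) (ha : M 0 0 ≠ 0)
    (s : Finset (Fin n)) :
    ((M.submatrix (fun i : (insert 0 (s.image Fin.succ) : Finset (Fin (n+1))) => (i : Fin (n+1)))
        (fun j : (insert 0 (s.image Fin.succ) : Finset (Fin (n+1))) => (j : Fin (n+1)))).det)
      = M 0 0 *
        (((schurc M).submatrix (fun i : s => (i : Fin n)) (fun j : s => (j : Fin n))).det) := by
  classical
  set s' : Finset (Fin (n+1)) := insert 0 (s.image Fin.succ) with hs'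
  -- the equivalence between Unit ⊕ s and s'
  have hmem0 : (0 : Fin (n+1)) ∈ s' := Finset.mem_insert_self _ _
  have hmemsucc : ∀ j : s, ((j : Fin n).succ) ∈ s' := fun j =>
    Finset.mem_insert_of_mem (Finset.mem_image_of_mem _ j.2)
  let f : Unit ⊕ s → s' := Sum.elim (fun _ => ⟨0, hmem0⟩) (fun j => ⟨(j : Fin n).succ, hmemsucc j⟩)
  have hbij : Function.Bijective f := by
    constructor
    · rintro (u | j) (u' | j') h
      · rfl
      · exact absurd (congrArg Subtype.val h).symm (Fin.succ_ne_zero _)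
      · exact absurd (congrArg Subtype.val h) (Fin.succ_ne_zero _)
      · exact congrArg Sum.inr (Subtype.ext (Fin.succ_injective _ (congrArg Subtype.val h)))
    · rintro ⟨y, hy⟩
      rcases Finset.mem_insert.mp hy with h0 | hsucc
      · exact ⟨Sum.inl (), Subtype.ext h0.symm⟩
      · obtain ⟨j, hj, rfl⟩ := Finset.mem_image.mp hsucc
        exact ⟨Sum.inr ⟨j, hj⟩, rfl⟩
  let e : (Unit ⊕ s) ≃ s' := Equiv.ofBijective f hbij
  set N : Matrix s' s' ℝ :=
    M.submatrix (fun i : s' => (i : Fin (n+1))) (fun j : s' => (j : Fin (n+1))) with hN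
  -- blocks
  set A1 : Matrix Unit Unit ℝ := Matrix.of (fun _ _ => M 0 0) with hA1
  set Bb : Matrix Unit s ℝ := Matrix.of (fun _ j => M 0 (j : Fin n).succ) with hBb
  set Cc : Matrix s Unit ℝ := Matrix.of (fun i _ => M (i : Fin n).succ 0) with hCc
  set Dd : Matrix s s ℝ := Matrix.of (fun i j => M (i : Fin n).succ (j : Fin n).succ) with hDd
  have hblocks : N.submatrix ⇑e ⇑e = Matrix.fromBlocks A1 Bb Cc Dd := by
    ext (u | i) (u' | j) <;> rfl
  letI iA1 : Invertible A1 := by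
    refine ⟨Matrix.of (fun _ _ => (M 0 0)⁻¹), ?_, ?_⟩ <;>
      · ext u u'
        simp [hA1, Matrix.mul_apply, inv_mul_cancel₀ ha, mul_inv_cancel₀ ha, Matrix.one_apply]
  have hIA1 : (⅟A1 : Matrix Unit Unit ℝ) = Matrix.of (fun _ _ => (M 0 0)⁻¹) := rfl
  have hschur : Dd - Cc * ⅟A1 * Bb
      = (schurc M).submatrix (fun i : s => (i : Fin n)) (fun j : s => (j : Fin n)) := by
    ext i j
    simp only [Matrix.sub_apply, Matrix.mul_apply, hIA1, Fintype.univ_punit,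
      Finset.sum_singleton, Matrix.of_apply, Matrix.submatrix_apply, hDd, hCc, hBb]
    simp [schurc, div_eq_mul_inv]
    ring
  have hdetN : N.det = (N.submatrix ⇑e ⇑e).det := (Matrix.det_submatrix_equiv_self e N).symm
  rw [hdetN, hblocks, Matrix.det_fromBlocks₁₁, hschur]
  congr 1
  rw [Matrix.det_unique, hA1]
  rfl

lemma schurc_isK {n : ℕ} (M : Matrix (Fin (n+1)) (Fin (n+1)) ℝ) (hK : IsKMatrix M) :
    IsKMatrix (schurc M) := by
  obtain ⟨hZ, hP⟩ := hK
  have ha : 0 < M 0 0 := diag_pos hP 0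
  constructor
  · intro i j hij
    have h1 : M i.succ j.succ ≤ 0 := hZ _ _ (fun h => hij (Fin.succ_injective _ h))
    have h2 : 0 ≤ M i.succ 0 * M 0 j.succ :=
      mul_nonneg_of_nonpos_of_nonpos (hZ _ _ (Fin.succ_ne_zero i)) (hZ _ _ (Fin.succ_ne_zero j).symm)
    have h3 : 0 ≤ M i.succ 0 * M 0 j.succ / M 0 0 := div_nonneg h2 ha.le
    simp only [schurc]
    linarith
  · intro s hs
    have hmin := schur_minor M ha.ne' s
    have hs' : (insert 0 (s.image Fin.succ) : Finset (Fin (n+1))).Nonempty :=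
      Finset.insert_nonempty _ _
    have h := hP _ hs'
    rw [hmin] at h
    have := div_pos h ha
    rwa [mul_div_cancel_left₀ _ ha.ne'] at this

lemma entry_nonneg_mul {α β γ : Type*} [Fintype β] (X : Matrix α β ℝ) (Y : Matrix β γ ℝ)
    (hX : ∀ i j, 0 ≤ X i j) (hY : ∀ i j, 0 ≤ Y i j) : ∀ i j, 0 ≤ (X * Y) i j := by
  intro i j
  rw [Matrix.mul_apply]
  exact Finset.sum_nonneg fun k _ => mul_nonneg (hX i k) (hY k j)

lemma inv_nonneg_of_K {n : ℕ} : ∀ (M : Matrix (Fin n) (Fin n) ℝ), IsKMatrix M →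
    ∀ i j, 0 ≤ M⁻¹ i j := by
  induction n with
  | zero => intro M hK i j; exact i.elim0
  | succ n ih =>
    intro M hK
    obtain ⟨hZ, hP⟩ := hK
    have ha : 0 < M 0 0 := diag_pos hP 0
    set S := schurc M with hSdef
    have hSK : IsKMatrix S := schurc_isK M ⟨hZ, hP⟩
    have hSinv : ∀ i j, 0 ≤ S⁻¹ i j := ih S hSK
    have hdetS : 0 < S.det := det_pos hSK.2
    -- block decomposition of M
    set A1 : Matrix Unit Unit ℝ := Matrix.of (fun _ _ => M 0 0) with hA1
    set Bb : Matrix Unit (Fin n) ℝ := Matrix.of (fun _ j => M 0 j.succ) with hBb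
    set Cc : Matrix (Fin n) Unit ℝ := Matrix.of (fun i _ => M i.succ 0) with hCc
    set Dd : Matrix (Fin n) (Fin n) ℝ := Matrix.of (fun i j => M i.succ j.succ) with hDd
    let E : (Unit ⊕ Fin n) ≃ Fin (n+1) :=
      ⟨Sum.elim (fun _ => 0) Fin.succ, fun i => Fin.cases (Sum.inl ()) Sum.inr i,
        by rintro (u | j) <;> simp, by
          intro i
          induction i using Fin.cases <;> simp⟩
    have hM : M.submatrix ⇑E ⇑E = Matrix.fromBlocks A1 Bb Cc Dd := by
      ext (u | i) (u' | j) <;> rfl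
    letI iA1 : Invertible A1 := by
      refine ⟨Matrix.of (fun _ _ => (M 0 0)⁻¹), ?_, ?_⟩ <;>
        · ext u u'
          simp [hA1, Matrix.mul_apply, inv_mul_cancel₀ ha.ne', mul_inv_cancel₀ ha.ne',
            Matrix.one_apply]
    have hIA1 : (⅟A1 : Matrix Unit Unit ℝ) = Matrix.of (fun _ _ => (M 0 0)⁻¹) := rfl
    have hschur : Dd - Cc * ⅟A1 * Bb = S := by
      ext i j
      simp only [Matrix.sub_apply, Matrix.mul_apply, hIA1, Fintype.univ_punit,
        Finset.sum_singleton, Matrix.of_apply, hDd, hCc, hBb]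
      simp [hSdef, schurc, div_eq_mul_inv]
      ring
    letI iS' : Invertible (Dd - Cc * ⅟A1 * Bb) := by
      rw [hschur]
      exact S.invertibleOfIsUnitDet (isUnit_iff_ne_zero.mpr hdetS.ne')
    letI iFB : Invertible (Matrix.fromBlocks A1 Bb Cc Dd) :=
      Matrix.fromBlocks₁₁Invertible A1 Bb Cc Dd
    have hfb := Matrix.invOf_fromBlocks₁₁_eq A1 Bb Cc Dd
    have hS'inv : (⅟(Dd - Cc * ⅟A1 * Bb) : Matrix (Fin n) (Fin n) ℝ) = S⁻¹ := by
      rw [Matrix.invOf_eq_nonsing_inv, hschur]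
    have hinvsub : M⁻¹.submatrix ⇑E ⇑E = ⅟(Matrix.fromBlocks A1 Bb Cc Dd) := by
      rw [← Matrix.inv_submatrix_equiv M E E, hM, Matrix.invOf_eq_nonsing_inv]
    -- sign facts
    have hIA1n : ∀ u u' : Unit, 0 ≤ (⅟A1 : Matrix Unit Unit ℝ) u u' := by
      intro u u'; rw [hIA1]; exact (inv_nonneg).mpr ha.le
    have hBbn : ∀ (u : Unit) j, 0 ≤ (-Bb) u j := by
      intro u j
      simp only [hBb, Matrix.neg_apply, Matrix.of_apply, neg_nonneg]
      exact hZ _ _ (Fin.succ_ne_zero j).symm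
    have hCcn : ∀ i (u : Unit), 0 ≤ (-Cc) i u := by
      intro i u
      simp only [hCc, Matrix.neg_apply, Matrix.of_apply, neg_nonneg]
      exact hZ _ _ (Fin.succ_ne_zero i)
    -- entries of the blocks of the inverse
    have h11 : ∀ u u' : Unit,
        0 ≤ (⅟A1 + ⅟A1 * Bb * ⅟(Dd - Cc * ⅟A1 * Bb) * Cc * ⅟A1) u u' := by
      intro u u'
      have : ⅟A1 * Bb * ⅟(Dd - Cc * ⅟A1 * Bb) * Cc * ⅟A1
          = ⅟A1 * (-Bb) * S⁻¹ * (-Cc) * ⅟A1 := by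
        rw [hS'inv]
        simp [Matrix.mul_neg, Matrix.neg_mul]
      rw [Matrix.add_apply, this]
      have := entry_nonneg_mul _ _ (entry_nonneg_mul _ _ (entry_nonneg_mul _ _
        (entry_nonneg_mul _ _ hIA1n hBbn) hSinv) hCcn) hIA1n
      exact add_nonneg (hIA1n u u') (this u u')
    have h12 : ∀ (u : Unit) j, 0 ≤ (-(⅟A1 * Bb * ⅟(Dd - Cc * ⅟A1 * Bb))) u j := by
      intro u j
      have : -(⅟A1 * Bb * ⅟(Dd - Cc * ⅟A1 * Bb)) = ⅟A1 * (-Bb) * S⁻¹ := by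
        rw [hS'inv]
        simp [Matrix.mul_neg, Matrix.neg_mul]
      rw [this]
      exact entry_nonneg_mul _ _ (entry_nonneg_mul _ _ hIA1n hBbn) hSinv u j
    have h21 : ∀ i (u : Unit), 0 ≤ (-(⅟(Dd - Cc * ⅟A1 * Bb) * Cc * ⅟A1)) i u := by
      intro i u
      have : -(⅟(Dd - Cc * ⅟A1 * Bb) * Cc * ⅟A1) = S⁻¹ * (-Cc) * ⅟A1 := by
        rw [hS'inv]
        simp [Matrix.mul_neg, Matrix.neg_mul]
      rw [this]
      exact entry_nonneg_mul _ _ (entry_nonneg_mul _ _ hSinv hCcn) hIA1n i u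
    -- conclude
    have key : ∀ p q : Unit ⊕ Fin n, 0 ≤ M⁻¹ (E p) (E q) := by
      intro p q
      have : M⁻¹ (E p) (E q) = (M⁻¹.submatrix ⇑E ⇑E) p q := rfl
      rw [this, hinvsub, hfb]
      rcases p with u | i <;> rcases q with u' | j
      · exact h11 u u'
      · exact h12 u j
      · exact h21 i u'
      · rw [Matrix.fromBlocks_apply₂₂, hS'inv]
        exact hSinv i j
    intro i j
    have := key (E.symm i) (E.symm j)
    rwa [E.apply_symm_apply, E.apply_symm_apply] at this

lemma exists_semipos {n : ℕ} (M : Matrix (Fin n) (Fin n) ℝ) (hK : IsKMatrix M) :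
    ∃ x : Fin n → ℝ, (∀ i, 0 < x i) ∧ (∀ i, 0 < M.mulVec x i) := by
  have hdet : 0 < M.det := det_pos hK.2
  have hu : IsUnit M.det := isUnit_iff_ne_zero.mpr hdet.ne'
  have hinv := inv_nonneg_of_K M hK
  refine ⟨M⁻¹.mulVec (fun _ => 1), ?_, ?_⟩
  · intro i
    by_contra hle
    push_neg at hle
    have hxi : M⁻¹.mulVec (fun _ => 1) i = ∑ j, M⁻¹ i j := by
      simp [Matrix.mulVec, dotProduct]
    have hsum0 : ∑ j, M⁻¹ i j = 0 :=
      le_antisymm (hxi ▸ hle) (Finset.sum_nonneg fun j _ => hinv i j)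
    have hall : ∀ j ∈ univ, M⁻¹ i j = 0 :=
      (Finset.sum_eq_zero_iff_of_nonneg (fun j _ => hinv i j)).mp hsum0
    have h1 : (M⁻¹ * M) i i = 0 := by
      rw [Matrix.mul_apply]
      exact Finset.sum_eq_zero fun j _ => by rw [hall j (mem_univ j), zero_mul]
    rw [Matrix.nonsing_inv_mul _ hu, Matrix.one_apply_eq] at h1
    exact one_ne_zero h1
  · intro i
    rw [Matrix.mulVec_mulVec, Matrix.mul_nonsing_inv _ hu, Matrix.one_mulVec]
    exact one_pos

lemma dir2 {n : ℕ} (A B : Matrix (Fin n) (Fin n) ℝ)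
    (hA : IsKMatrix A) (hB : ∀ i j, 0 ≤ B i j) (hAB : IsKMatrix (A - B)) :
    ∀ μ ∈ spectrum ℂ ((A⁻¹ * B).map (Complex.ofReal)), ‖μ‖ < 1 := by
  intro μ hμ
  by_contra hge
  push_neg at hge
  have hμ0 : μ ≠ 0 := by
    intro h
    rw [h, norm_zero] at hge
    linarith
  set C' := (A⁻¹ * B).map (Complex.ofReal) with hC'
  have hdetA : 0 < A.det := det_pos hA.2
  have huA : IsUnit A.det := isUnit_iff_ne_zero.mpr hdetA.ne'
  have hnu : ¬IsUnit ((algebraMap ℂ (Matrix (Fin n) (Fin n) ℂ)) μ - C') := spectrum.mem_iff.mp hμ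
  have hdet0 : ((algebraMap ℂ (Matrix (Fin n) (Fin n) ℂ)) μ - C').det = 0 := by
    by_contra h
    exact hnu ((Matrix.isUnit_iff_isUnit_det _).mpr (isUnit_iff_ne_zero.mpr h))
  obtain ⟨v, hv0, hv⟩ := Matrix.exists_mulVec_eq_zero_iff.mpr hdet0
  have hCv : C' *ᵥ v = μ • v := by
    have h1 : ((algebraMap ℂ (Matrix (Fin n) (Fin n) ℂ)) μ - C') *ᵥ v
        = μ • v - C' *ᵥ v := by
      rw [Matrix.sub_mulVec]
      congr 1
      rw [Algebra.algebraMap_eq_smul_one, Matrix.smul_mulVec, Matrix.one_mulVec]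
    rw [h1, sub_eq_zero] at hv
    exact hv.symm
  set A' := A.map (Complex.ofReal) with hA'
  set B' := B.map (Complex.ofReal) with hB'
  have hAC : A' * C' = B' := by
    have h2 : A * (A⁻¹ * B) = B := by
      rw [← Matrix.mul_assoc, Matrix.mul_nonsing_inv _ huA, Matrix.one_mul]
    have h3 : (A * (A⁻¹ * B)).map (Complex.ofReal) = A' * C' :=
      Matrix.map_mul (f := Complex.ofRealHom)
    rw [← h3, h2]
  have hBv : ∀ i, (B' *ᵥ v) i = μ * (A' *ᵥ v) i := by
    intro i
    have : B' *ᵥ v = μ • (A' *ᵥ v) := by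
      rw [← hAC, ← Matrix.mulVec_mulVec, hCv, Matrix.mulVec_smul]
    rw [this]; rfl
  obtain ⟨x, hx, hABx⟩ := exists_semipos (A - B) hAB
  obtain ⟨j0, hj0⟩ : ∃ j, v j ≠ 0 := Function.ne_iff.mp hv0
  haveI : Nonempty (Fin n) := ⟨j0⟩
  obtain ⟨i0, -, hmax⟩ := Finset.exists_max_image (univ : Finset (Fin n))
    (fun i => ‖v i‖ / x i) ⟨j0, mem_univ _⟩
  set c : ℝ := ‖v i0‖ / x i0 with hc
  have hcb : ∀ i, ‖v i‖ ≤ c * x i := by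
    intro i
    have h := hmax i (mem_univ i)
    calc ‖v i‖ = ‖v i‖ / x i * x i :=
      (div_mul_cancel₀ _ (hx i).ne').symm
    _ ≤ c * x i := mul_le_mul_of_nonneg_right h (hx i).le
  have hcpos : 0 < c := by
    have h1 : 0 < ‖v j0‖ := by
      simpa using hj0
    exact lt_of_lt_of_le (div_pos h1 (hx j0)) (hmax j0 (mem_univ j0))
  have hvi0 : ‖v i0‖ = c * x i0 := (div_mul_cancel₀ _ (hx i0).ne').symm
  have hAii : 0 < A i0 i0 := diag_pos hA.2 i0
  -- row i0 computation
  have hrowA : (A' *ᵥ v) i0 = (A i0 i0 : ℂ) * v i0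
      + ∑ j ∈ univ.erase i0, (A i0 j : ℂ) * v j := by
    rw [Matrix.mulVec, dotProduct, ← Finset.add_sum_erase _ _ (mem_univ i0)]
    rfl
  have h1 : (A' *ᵥ v) i0 = μ⁻¹ * (B' *ᵥ v) i0 := by
    rw [hBv i0, ← mul_assoc, inv_mul_cancel₀ hμ0, one_mul]
  have heq : (A i0 i0 : ℂ) * v i0
      = -∑ j ∈ univ.erase i0, (A i0 j : ℂ) * v j + μ⁻¹ * (B' *ᵥ v) i0 := by
    rw [← h1, hrowA]; ring
  -- estimates
  have hterm1 : ‖∑ j ∈ univ.erase i0, (A i0 j : ℂ) * v j‖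
      ≤ ∑ j ∈ univ.erase i0, (-A i0 j) * (c * x j) := by
    refine (norm_sum_le _ _).trans (Finset.sum_le_sum ?_)
    intro j hj
    have hji : (i0 : Fin n) ≠ j := (Finset.mem_erase.mp hj).1.symm
    have hAij : A i0 j ≤ 0 := hA.1 i0 j hji
    rw [norm_mul, Complex.norm_real, Real.norm_eq_abs, abs_of_nonpos hAij]
    exact mul_le_mul_of_nonneg_left (hcb j) (neg_nonneg.mpr hAij)
  have hBvterm : ‖(B' *ᵥ v) i0‖ ≤ ∑ j, B i0 j * (c * x j) := by
    have hrw : (B' *ᵥ v) i0 = ∑ j, (B i0 j : ℂ) * v j := rfl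
    rw [hrw]
    refine (norm_sum_le _ _).trans (Finset.sum_le_sum ?_)
    intro j hj
    rw [norm_mul, Complex.norm_real, Real.norm_eq_abs, abs_of_nonneg (hB i0 j)]
    exact mul_le_mul_of_nonneg_left (hcb j) (hB i0 j)
  have hinvμ : ‖μ⁻¹‖ ≤ 1 := by
    rw [norm_inv]
    have h0 : 0 < ‖μ‖ := lt_of_lt_of_le one_pos hge
    rw [inv_le_one_iff₀]
    right; exact hge
  have hmain : A i0 i0 * (c * x i0) ≤ (∑ j ∈ univ.erase i0, (-A i0 j) * (c * x j))
      + ∑ j, B i0 j * (c * x j) := by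
    have e1 : A i0 i0 * (c * x i0) = ‖(A i0 i0 : ℂ) * v i0‖ := by
      rw [norm_mul, Complex.norm_real, Real.norm_eq_abs, abs_of_pos hAii, hvi0]
    rw [e1, heq]
    refine (norm_add_le _ _).trans ?_
    have e2 : ‖-∑ j ∈ univ.erase i0, (A i0 j : ℂ) * v j‖
        = ‖∑ j ∈ univ.erase i0, (A i0 j : ℂ) * v j‖ := norm_neg _
    refine add_le_add (e2 ▸ hterm1) ?_
    rw [norm_mul]
    have hBnn : (0:ℝ) ≤ ∑ j, B i0 j * (c * x j) :=
      Finset.sum_nonneg fun j _ => mul_nonneg (hB i0 j) (mul_nonneg hcpos.le (hx j).le)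
    calc ‖μ⁻¹‖ * ‖(B' *ᵥ v) i0‖
        ≤ 1 * (∑ j, B i0 j * (c * x j)) :=
          mul_le_mul hinvμ hBvterm (norm_nonneg _) one_pos.le
      _ = ∑ j, B i0 j * (c * x j) := one_mul _
  have hsplitA : ∑ j ∈ univ.erase i0, (-A i0 j) * (c * x j)
      = c * (A i0 i0 * x i0 - (A *ᵥ x) i0) := by
    have hAx : (A *ᵥ x) i0 = A i0 i0 * x i0 + ∑ j ∈ univ.erase i0, A i0 j * x j := by
      rw [Matrix.mulVec, dotProduct, ← Finset.add_sum_erase _ _ (mem_univ i0)]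
    rw [hAx]
    have h5 : ∑ j ∈ univ.erase i0, (-A i0 j) * (c * x j)
        = c * ∑ j ∈ univ.erase i0, -(A i0 j * x j) := by
      rw [Finset.mul_sum]
      exact Finset.sum_congr rfl (fun j _ => by ring)
    rw [h5, Finset.sum_neg_distrib]
    ring
  have hsplitB : ∑ j, B i0 j * (c * x j) = c * ((B *ᵥ x) i0) := by
    rw [Matrix.mulVec, dotProduct, Finset.mul_sum]
    exact Finset.sum_congr rfl (fun j _ => by ring)
  have hABi : ((A - B) *ᵥ x) i0 = (A *ᵥ x) i0 - (B *ᵥ x) i0 := by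
    rw [Matrix.sub_mulVec]; rfl
  have hfin := hABx i0
  rw [hABi] at hfin
  rw [hsplitA, hsplitB] at hmain
  nlinarith [hx i0, hcpos]

section Analytic

attribute [local instance] Matrix.linftyOpNormedRing Matrix.linftyOpNormedAlgebra

variable {n : ℕ}

lemma entry_nnnorm_le (X : Matrix (Fin n) (Fin n) ℂ) (i j : Fin n) : ‖X i j‖₊ ≤ ‖X‖₊ := by
  rw [Matrix.linfty_opNNNorm_def]
  calc ‖X i j‖₊ ≤ ∑ j', ‖X i j'‖₊ :=
        Finset.single_le_sum (f := fun j' => ‖X i j'‖₊) (fun k _ => zero_le) (mem_univ j)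
  _ ≤ _ := Finset.le_sup (f := fun i => ∑ j', ‖X i j'‖₊) (mem_univ i)

lemma specrad_lt_one (X : Matrix (Fin n) (Fin n) ℂ)
    (h : ∀ μ ∈ spectrum ℂ X, ‖μ‖ < 1) : spectralRadius ℂ X < 1 := by
  rcases Set.eq_empty_or_nonempty (spectrum ℂ X) with he | hne
  · rw [spectralRadius, he]
    simp
  · have hfin : (spectrum ℂ X).Finite := X.finite_spectrum
    obtain ⟨μ0, hμ0, hmax⟩ := Set.Finite.exists_maximalFor (fun μ => ‖μ‖₊) _ hfin hne
    have hsup : spectralRadius ℂ X ≤ (‖μ0‖₊ : ENNReal) := by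
      rw [spectralRadius]
      refine iSup₂_le fun μ hμ => ?_
      have : ‖μ‖₊ ≤ ‖μ0‖₊ := by
        by_contra hlt
        push_neg at hlt
        exact (not_le.mpr hlt) (hmax hμ hlt.le)
      exact_mod_cast this
    have : (‖μ0‖₊ : ENNReal) < 1 := by
      have h1 : ‖μ0‖ < 1 := by
        exact h μ0 hμ0
      rw [← ENNReal.coe_one, ENNReal.coe_lt_coe, ← NNReal.coe_lt_coe]
      simpa using h1
    exact lt_of_le_of_lt hsup this

lemma pow_entry_tendsto_zero (X : Matrix (Fin n) (Fin n) ℂ)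
    (h : ∀ μ ∈ spectrum ℂ X, ‖μ‖ < 1) (i j : Fin n) :
    Tendsto (fun k => ‖(X ^ k) i j‖) atTop (𝓝 0) := by
  haveI : CompleteSpace (Matrix (Fin n) (Fin n) ℂ) := FiniteDimensional.complete ℂ _
  have hρ : spectralRadius ℂ X < 1 := specrad_lt_one X h
  have hg := spectrum.pow_nnnorm_pow_one_div_tendsto_nhds_spectralRadius X
  obtain ⟨r, hr1, hr2⟩ := exists_between hρ
  have hrtop : r ≠ ⊤ := (hr2.trans_le le_top).ne
  set r0 : NNReal := r.toNNReal with hr0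
  have hr0coe : (r0 : ENNReal) = r := ENNReal.coe_toNNReal hrtop
  have hr01 : r0 < 1 := by
    rw [← ENNReal.coe_lt_one_iff, hr0coe]; exact hr2
  have hev : ∀ᶠ (k : ℕ) in atTop, (‖X ^ k‖₊ : ENNReal) ^ (1 / (k : ℝ)) < r :=
    hg.eventually_lt_const hr1
  have hbound : ∀ᶠ k in atTop, ‖(X ^ k) i j‖ ≤ (r0 : ℝ) ^ k := by
    filter_upwards [hev, eventually_ge_atTop 1] with k hk hk1
    have hk0 : (k : ℝ) ≠ 0 := by positivity
    have h1 : (‖X ^ k‖₊ : ENNReal) ≤ r ^ (k : ℝ) := by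
      have := ENNReal.rpow_le_rpow hk.le (by positivity : (0:ℝ) ≤ (k:ℝ))
      rwa [← ENNReal.rpow_mul, one_div_mul_cancel hk0, ENNReal.rpow_one] at this
    have h2 : (‖X ^ k‖₊ : ENNReal) ≤ (r0 : ENNReal) ^ k := by
      rw [hr0coe, ← ENNReal.rpow_natCast]
      exact h1
    rw [← ENNReal.coe_pow, ENNReal.coe_le_coe] at h2
    calc ‖(X ^ k) i j‖ = ((‖(X ^ k) i j‖₊ : NNReal) : ℝ) := rfl
    _ ≤ ((‖X ^ k‖₊ : NNReal) : ℝ) := by exact_mod_cast entry_nnnorm_le _ i j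
    _ ≤ ((r0 ^ k : NNReal) : ℝ) := by exact_mod_cast h2
    _ = (r0 : ℝ) ^ k := by push_cast; ring
  refine squeeze_zero' (Eventually.of_forall fun k => norm_nonneg _) hbound ?_
  exact tendsto_pow_atTop_nhds_zero_of_lt_one (by positivity) (by exact_mod_cast hr01)

end Analytic

lemma dir1 {n : ℕ} (A B : Matrix (Fin n) (Fin n) ℝ)
    (hA : IsKMatrix A) (hB : ∀ i j, 0 ≤ B i j)
    (hspec : ∀ μ ∈ spectrum ℂ ((A⁻¹ * B).map (Complex.ofReal)), ‖μ‖ < 1) :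
    IsKMatrix (A - B) := by
  have hZAB : IsZMatrix (A - B) := by
    intro i j hij
    have h1 := hA.1 i j hij
    have h2 := hB i j
    simp only [Matrix.sub_apply]
    linarith
  refine ⟨hZAB, ?_⟩
  set C := A⁻¹ * B with hC
  have hdetA : 0 < A.det := det_pos hA.2
  have huA : IsUnit A.det := isUnit_iff_ne_zero.mpr hdetA.ne'
  have hCnn : ∀ i j, 0 ≤ C i j := entry_nonneg_mul _ _ (inv_nonneg_of_K A hA) hB
  have hpow : ∀ k, ∀ i j, 0 ≤ (C ^ k) i j := by
    intro k
    induction k with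
    | zero =>
      intro i j
      by_cases h : i = j <;> simp [h, Matrix.one_apply]
    | succ k ih =>
      rw [pow_succ]
      exact entry_nonneg_mul _ _ ih hCnn
  -- 1 - C is invertible
  have hmap1C : (1 - C).map (Complex.ofReal) = 1 - C.map (Complex.ofReal) := by
    ext i j
    by_cases h : i = j <;> simp [Matrix.sub_apply, Matrix.one_apply, h]
  have hdet1C : (1 - C).det ≠ 0 := by
    intro h0
    have hmem : (1 : ℂ) ∈ spectrum ℂ (C.map (Complex.ofReal)) := by
      rw [spectrum.mem_iff]
      intro hu
      rw [Matrix.isUnit_iff_isUnit_det] at hu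
      have halg : (algebraMap ℂ (Matrix (Fin n) (Fin n) ℂ)) 1 = 1 := _root_.map_one _
      have hd : ((algebraMap ℂ (Matrix (Fin n) (Fin n) ℂ)) 1 - C.map (Complex.ofReal)).det
          = ((1 - C).map (Complex.ofReal)).det := by
        rw [hmap1C, halg]
      have hdet' : ((1 - C).map (Complex.ofReal)).det = Complex.ofReal ((1 - C).det) :=
        (RingHom.map_det Complex.ofRealHom (1 - C)).symm
      rw [hd, hdet', h0] at hu
      simpa using hu
    have := hspec 1 hmem
    simp at this
  have hu1C : IsUnit (1 - C).det := isUnit_iff_ne_zero.mpr hdet1C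
  obtain ⟨y, hy, hAy⟩ := exists_semipos A hA
  set x := (1 - C)⁻¹.mulVec y with hxdef
  have h1Cx : (1 - C).mulVec x = y := by
    rw [hxdef, Matrix.mulVec_mulVec, Matrix.mul_nonsing_inv _ hu1C, Matrix.one_mulVec]
  have hABfact : A * (1 - C) = A - B := by
    rw [Matrix.mul_sub, Matrix.mul_one, hC, ← Matrix.mul_assoc,
      Matrix.mul_nonsing_inv _ huA, Matrix.one_mul]
  have hABx : ∀ i, 0 < ((A - B).mulVec x) i := by
    have : (A - B).mulVec x = A.mulVec y := by
      rw [← hABfact, ← Matrix.mulVec_mulVec, h1Cx]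
    rw [this]
    exact hAy
  -- positivity of x via partial geometric sums
  have hxpos : ∀ i, 0 < x i := by
    intro i
    -- partial sums identity
    have hSk : ∀ K : ℕ, (∑ m ∈ Finset.range K, C ^ m) = (1 - C ^ K) * (1 - C)⁻¹ := by
      intro K
      have hg : (∑ m ∈ Finset.range K, C ^ m) * (C - 1) = C ^ K - 1 := geom_sum_mul C K
      have hg' : (∑ m ∈ Finset.range K, C ^ m) * (1 - C) = 1 - C ^ K := by
        have := congrArg (fun M => -M) hg
        simpa [Matrix.mul_sub, Matrix.sub_mul, neg_sub] using this
      calc (∑ m ∈ Finset.range K, C ^ m)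
          = (∑ m ∈ Finset.range K, C ^ m) * ((1 - C) * (1 - C)⁻¹) := by
            rw [Matrix.mul_nonsing_inv _ hu1C, Matrix.mul_one]
        _ = ((∑ m ∈ Finset.range K, C ^ m) * (1 - C)) * (1 - C)⁻¹ := by
            rw [Matrix.mul_assoc]
        _ = (1 - C ^ K) * (1 - C)⁻¹ := by rw [hg']
    -- value of partial sums applied to y
    have hSky : ∀ K : ℕ, ((∑ m ∈ Finset.range K, C ^ m).mulVec y) i
        = x i - ((C ^ K).mulVec x) i := by
      intro K
      rw [hSk K, ← Matrix.mulVec_mulVec]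
      have : (1 - C)⁻¹.mulVec y = x := rfl
      rw [this, Matrix.sub_mulVec]
      simp [Matrix.one_mulVec]
    -- lower bound for partial sums
    have hlower : ∀ K : ℕ, 1 ≤ K → y i ≤ ((∑ m ∈ Finset.range K, C ^ m).mulVec y) i := by
      intro K hK
      have hexp : ((∑ m ∈ Finset.range K, C ^ m).mulVec y) i
          = ∑ m ∈ Finset.range K, ((C ^ m).mulVec y) i := by
        calc ((∑ m ∈ Finset.range K, C ^ m).mulVec y) i
            = ∑ j, (∑ m ∈ Finset.range K, (C ^ m) i j) * y j := by
              simp [Matrix.mulVec, dotProduct, Matrix.sum_apply]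
          _ = ∑ j, ∑ m ∈ Finset.range K, (C ^ m) i j * y j :=
              Finset.sum_congr rfl (fun j _ => Finset.sum_mul _ _ _)
          _ = ∑ m ∈ Finset.range K, ∑ j, (C ^ m) i j * y j := Finset.sum_comm
          _ = ∑ m ∈ Finset.range K, ((C ^ m).mulVec y) i := rfl
      rw [hexp]
      have h0mem : 0 ∈ Finset.range K := Finset.mem_range.mpr hK
      have hterm : ∀ m ∈ Finset.range K, 0 ≤ ((C ^ m).mulVec y) i := by
        intro m _
        have hr : ((C ^ m).mulVec y) i = ∑ j, (C ^ m) i j * y j := rfl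
        rw [hr]
        exact Finset.sum_nonneg fun j _ => mul_nonneg (hpow m i j) (hy j).le
      have h00 : ((C ^ 0).mulVec y) i = y i := by
        simp [Matrix.one_mulVec]
      calc y i = ((C ^ 0).mulVec y) i := h00.symm
        _ ≤ ∑ m ∈ Finset.range K, ((C ^ m).mulVec y) i :=
          Finset.single_le_sum hterm h0mem
    -- limit of the correction term
    have hCk0 : Tendsto (fun K => ((C ^ K).mulVec x) i) atTop (𝓝 0) := by
      have hterm : ∀ j : Fin n, Tendsto (fun K => ((C ^ K) i j) * x j) atTop (𝓝 0) := by
        intro j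
        have hmappow : ∀ K : ℕ, ((C.map (Complex.ofReal)) ^ K) i j
            = ((C ^ K) i j : ℂ) := by
          intro K
          have h5 : (C.map (Complex.ofReal)) ^ K = (C ^ K).map (Complex.ofReal) := by
            have h6 := map_pow (Complex.ofRealHom.mapMatrix) C K
            exact h6.symm
          rw [h5]
          rfl
        have h1 := pow_entry_tendsto_zero (C.map (Complex.ofReal)) hspec i j
        have h2 : Tendsto (fun K => |(C ^ K) i j|) atTop (𝓝 0) := by
          have heq : (fun K => |(C ^ K) i j|)
              = fun K => ‖((C.map (Complex.ofReal)) ^ K) i j‖ := by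
            funext K
            rw [hmappow K, Complex.norm_real, Real.norm_eq_abs]
          rw [heq]
          exact h1
        have h3 : Tendsto (fun K => (C ^ K) i j) atTop (𝓝 0) := by
          have hneg : Tendsto (fun K => -|(C ^ K) i j|) atTop (𝓝 0) := by
            simpa using h2.neg
          exact tendsto_of_tendsto_of_tendsto_of_le_of_le hneg h2
            (fun K => neg_abs_le _) (fun K => le_abs_self _)
        have := h3.mul_const (x j)
        simpa using this
      have : Tendsto (fun K => ∑ j, ((C ^ K) i j) * x j) atTop (𝓝 0) := by
        have := tendsto_finset_sum (univ : Finset (Fin n)) (fun j _ => hterm j)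
        simpa using this
      exact this
    have hxlim : Tendsto (fun K => x i - ((C ^ K).mulVec x) i) atTop (𝓝 (x i)) := by
      simpa using (tendsto_const_nhds (x := x i)).sub hCk0
    have : y i ≤ x i := by
      refine ge_of_tendsto hxlim ?_
      filter_upwards [eventually_ge_atTop 1] with K hK
      rw [← hSky K]
      exact hlower K hK
    exact lt_of_lt_of_le (hy i) this
  exact isP_of_semipos _ hZAB x hxpos hABx

/-- For a K-matrix `A` and an entrywise nonnegative matrix `B`, the spectral radius of
`A⁻¹ B` is `< 1` (i.e. every complex eigenvalue has modulus `< 1`) iff `A - B` is a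
K-matrix. -/
theorem stmt1 {n : ℕ} (A B : Matrix (Fin n) (Fin n) ℝ)
    (hA : IsKMatrix A) (hB : ∀ i j, 0 ≤ B i j) :
    (∀ μ ∈ spectrum ℂ ((A⁻¹ * B).map (Complex.ofReal)), ‖μ‖ < 1) ↔
      IsKMatrix (A - B) :=
  ⟨fun h => dir1 A B hA hB h, fun h => dir2 A B hA hB h⟩
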